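/- Let μ be a radially symmetric unimodal probability measure on ℝ^d, and write R(x,r) = μ(B(x,r)) and R*(r) = R(0,r). Let 0 < r₁ < r₂, and let P(B_{r₂−r₁}, r₁) denote the maximal number of pairwise disjoint closed balls of radius r₁ whose centers lie in the ball B(0, r₂−r₁). Then for any x with ‖x‖₂ = r₂, R(x, r₁) ≤ R*(r₂) / P(B_{r₂−r₁}, r₁). -/

import Mathlib

open MeasureTheory
open scoped ENNReal RealInnerProductSpace

/-- Key monotonicity lemma: for a radially symmetric unimodal density, the mass of a
closed ball of fixed radius is non-increasing in the norm of its center.  Proved by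
reflecting across the perpendicular bisector hyperplane of the two centers. -/
lemma radial_ball_mass_anti
    (d : ℕ) (f : ℝ → ℝ≥0∞) (hf_meas : Measurable f)
    (hf_mono : AntitoneOn f (Set.Ici 0))
    (x z : EuclideanSpace ℝ (Fin d)) (hzx : ‖z‖ ≤ ‖x‖) (r : ℝ) :
    volume.withDensity (fun y => f ‖y‖) (Metric.closedBall x r)
      ≤ volume.withDensity (fun y => f ‖y‖) (Metric.closedBall z r) := by
  classical
  by_cases hxz : x = z
  · rw [hxz]
  -- setup
  set μ := volume.withDensity (fun y : EuclideanSpace ℝ (Fin d) => f ‖y‖) with hμdef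
  set g : EuclideanSpace ℝ (Fin d) → ℝ≥0∞ := fun y => f ‖y‖ with hg
  have hg_meas : Measurable g := hf_meas.comp measurable_norm
  set u : EuclideanSpace ℝ (Fin d) := x - z with hu_def
  have hu : u ≠ 0 := sub_ne_zero.2 hxz
  have hun : ‖u‖ ≠ 0 := norm_ne_zero_iff.2 hu
  have hc : (0:ℝ) < ⟪u, u⟫ := by rw [real_inner_self_eq_norm_sq]; positivity
  set c : ℝ := ⟪u, u⟫ with hc_def
  set w : EuclideanSpace ℝ (Fin d) := (2⁻¹ : ℝ) • (x + z) with hw_def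
  set R : EuclideanSpace ℝ (Fin d) ≃ₗᵢ[ℝ] EuclideanSpace ℝ (Fin d) := Submodule.reflection (ℝ ∙ u)ᗮ with hR_def
  set σ : EuclideanSpace ℝ (Fin d) → EuclideanSpace ℝ (Fin d) := fun y => R (y - w) + w with hσ_def
  -- explicit formula for the reflection
  have hRform' : ∀ v : EuclideanSpace ℝ (Fin d), R v = v - (2 * ⟪u, v⟫ / c) • u := by
    intro v
    have h1 : R v = -(Submodule.reflection (ℝ ∙ u) v) := Submodule.reflection_orthogonal_apply _ _
    rw [h1, Submodule.reflection_singleton_apply]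
    simp only [RCLike.ofReal_real_eq_id, id_eq]
    have h3 : ⟪u, v⟫ / ((‖u‖:ℝ)^2) = ⟪u, v⟫ / c := by
      rw [hc_def, real_inner_self_eq_norm_sq]
    rw [h3]
    have h2 : (2 : ℕ) • ((⟪u, v⟫ / c) • u) = (2 * ⟪u, v⟫ / c) • u := by
      rw [two_smul, ← add_smul]; ring_nf
    rw [h2]
    module
  have hσform : ∀ y : EuclideanSpace ℝ (Fin d), σ y = y - (2 * ⟪u, y - w⟫ / c) • u := by
    intro y
    simp only [hσ_def]
    rw [hRform' (y - w)]
    module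
  -- σ x = z
  have huw : ⟪u, w⟫ = 2⁻¹ * (‖x‖^2 - ‖z‖^2) := by
    simp only [hu_def, hw_def, inner_sub_left, real_inner_smul_right, inner_add_right,
      real_inner_self_eq_norm_sq, real_inner_comm z x]
    ring
  have hσx : σ x = z := by
    have hxw : x - w = (2⁻¹ : ℝ) • u := by
      simp only [hw_def, hu_def]; module
    have : ⟪u, x - w⟫ = 2⁻¹ * c := by
      rw [hxw, real_inner_smul_right, hc_def]
    rw [hσform x, this]
    have h2c : 2 * (2⁻¹ * c) / c = 1 := by field_simp
    rw [h2c, one_smul]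
    simp only [hu_def]; abel
  -- σ is an involution
  have hσσ : ∀ y, σ (σ y) = y := by
    intro y
    simp only [hσ_def, hR_def, add_sub_cancel_right, Submodule.reflection_reflection _,
      sub_add_cancel]
  have hσz : σ z = x := by
    conv_lhs => rw [← hσx]
    exact hσσ x
  -- σ preserves distances
  have hdist : ∀ a b : EuclideanSpace ℝ (Fin d), dist (σ a) (σ b) = dist a b := by
    intro a b
    simp only [hσ_def, dist_eq_norm, add_sub_add_right_eq_sub, ← map_sub,
      sub_sub_sub_cancel_right, R.norm_map]
  -- membership swap
  have hmemx : ∀ y : EuclideanSpace ℝ (Fin d), σ y ∈ Metric.closedBall x r ↔ y ∈ Metric.closedBall z r := by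
    intro y
    simp only [Metric.mem_closedBall]
    rw [← hσz, hdist y z]
  have hmemz : ∀ y : EuclideanSpace ℝ (Fin d), σ y ∈ Metric.closedBall z r ↔ y ∈ Metric.closedBall x r := by
    intro y
    simp only [Metric.mem_closedBall]
    rw [← hσx, hdist y x]
  -- norm formula
  have hnorm_sq : ∀ y : EuclideanSpace ℝ (Fin d), ‖σ y‖^2 = ‖y‖^2 - (2 * ⟪u, y - w⟫ / c) * (‖x‖^2 - ‖z‖^2) := by
    intro y
    set a : ℝ := 2 * ⟪u, y - w⟫ / c with ha_def
    have hac : a * c = 2 * ⟪u, y - w⟫ := by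
      rw [ha_def]; field_simp
    have expand : ‖σ y‖^2 = ‖y‖^2 - 2 * (a * ⟪y, u⟫) + a^2 * c := by
      rw [hσform y, ← ha_def]
      rw [norm_sub_sq_real, real_inner_smul_right, norm_smul]
      have h6 : ‖a‖^2 * ‖u‖^2 = a^2 * c := by
        rw [hc_def, real_inner_self_eq_norm_sq, Real.norm_eq_abs, sq_abs]
      rw [mul_pow, h6]
    rw [expand]
    have hyu : ⟪y, u⟫ = ⟪u, y - w⟫ + ⟪u, w⟫ := by
      rw [← inner_add_right, sub_add_cancel]
      exact real_inner_comm _ _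
    rw [hyu, huw]
    have h1 : a^2 * c = a * (a * c) := by ring
    rw [h1, hac]
    ring
  -- sign of inner product from ball membership
  have hsign : ∀ y : EuclideanSpace ℝ (Fin d), ‖y - z‖^2 - ‖y - x‖^2 = 2 * ⟪u, y - w⟫ := by
    intro y
    simp only [norm_sub_sq_real, hu_def, hw_def, inner_sub_left, inner_sub_right,
      real_inner_smul_right, inner_add_right, real_inner_self_eq_norm_sq,
      real_inner_comm z x, real_inner_comm y x, real_inner_comm y z]
    ring
  have hxz2 : ‖z‖^2 ≤ ‖x‖^2 := by
    have := norm_nonneg z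
    nlinarith
  -- the two pointwise cases
  have hcase1 : ∀ y : EuclideanSpace ℝ (Fin d), y ∈ Metric.closedBall x r → y ∉ Metric.closedBall z r →
      g y ≤ g (σ y) := by
    intro y hy hyz
    have h1 : ‖y - x‖ ≤ r := by simpa [dist_eq_norm] using hy
    have h2 : r < ‖y - z‖ := by
      simp only [Metric.mem_closedBall, not_le, dist_eq_norm] at hyz; exact hyz
    have ht : 0 ≤ ⟪u, y - w⟫ := by
      have h3 : ‖y - x‖ < ‖y - z‖ := lt_of_le_of_lt h1 h2
      have h4 : ‖y - x‖^2 ≤ ‖y - z‖^2 :=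
        pow_le_pow_left₀ (norm_nonneg _) h3.le 2
      linarith [hsign y]
    have hle : ‖σ y‖ ≤ ‖y‖ := by
      have h5 : ‖σ y‖^2 ≤ ‖y‖^2 := by
        rw [hnorm_sq y]
        have : 0 ≤ (2 * ⟪u, y - w⟫ / c) * (‖x‖^2 - ‖z‖^2) := by
          apply mul_nonneg
          · exact div_nonneg (by linarith) (le_of_lt hc)
          · linarith
        linarith
      have h7 := Real.sqrt_le_sqrt h5
      rwa [Real.sqrt_sq (norm_nonneg _), Real.sqrt_sq (norm_nonneg _)] at h7
    exact hf_mono (Set.mem_Ici.2 (norm_nonneg _)) (Set.mem_Ici.2 (norm_nonneg _)) hle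
  have hcase2 : ∀ y : EuclideanSpace ℝ (Fin d), y ∉ Metric.closedBall x r → y ∈ Metric.closedBall z r →
      g (σ y) ≤ g y := by
    intro y hyx hy
    have h1 : ‖y - z‖ ≤ r := by simpa [dist_eq_norm] using hy
    have h2 : r < ‖y - x‖ := by
      simp only [Metric.mem_closedBall, not_le, dist_eq_norm] at hyx; exact hyx
    have ht : ⟪u, y - w⟫ ≤ 0 := by
      have h3 : ‖y - z‖ < ‖y - x‖ := lt_of_le_of_lt h1 h2
      have h4 : ‖y - z‖^2 ≤ ‖y - x‖^2 :=
        pow_le_pow_left₀ (norm_nonneg _) h3.le 2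
      linarith [hsign y]
    have hle : ‖y‖ ≤ ‖σ y‖ := by
      have h5 : ‖y‖^2 ≤ ‖σ y‖^2 := by
        rw [hnorm_sq y]
        have : (2 * ⟪u, y - w⟫ / c) * (‖x‖^2 - ‖z‖^2) ≤ 0 := by
          apply mul_nonpos_of_nonpos_of_nonneg
          · apply div_nonpos_of_nonpos_of_nonneg
            · linarith
            · linarith
          · linarith
        linarith
      have h7 := Real.sqrt_le_sqrt h5
      rwa [Real.sqrt_sq (norm_nonneg _), Real.sqrt_sq (norm_nonneg _)] at h7
    exact hf_mono (Set.mem_Ici.2 (norm_nonneg _)) (Set.mem_Ici.2 (norm_nonneg _)) hle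
  -- σ is measure preserving
  have hσmp : MeasurePreserving σ (volume : Measure (EuclideanSpace ℝ (Fin d))) volume := by
    have h1 : MeasurePreserving (fun y : EuclideanSpace ℝ (Fin d) => y - w) volume volume :=
      measurePreserving_sub_right volume w
    have h2 : MeasurePreserving (R : EuclideanSpace ℝ (Fin d) → EuclideanSpace ℝ (Fin d)) volume volume :=
      R.measurePreserving
    have h3 : MeasurePreserving (fun y : EuclideanSpace ℝ (Fin d) => y + w) volume volume :=
      measurePreserving_add_right volume w
    exact (h3.comp h2).comp h1
  -- the integral comparison
  set Bx := Metric.closedBall x r with hBx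
  set Bz := Metric.closedBall z r with hBz
  have hBx_meas : MeasurableSet Bx := measurableSet_closedBall
  have hBz_meas : MeasurableSet Bz := measurableSet_closedBall
  have hpt : ∀ y : EuclideanSpace ℝ (Fin d),
      Bx.indicator g y + Bz.indicator (fun y => g (σ y)) y
        ≤ Bz.indicator g y + Bx.indicator (fun y => g (σ y)) y := by
    intro y
    by_cases hyx : y ∈ Bx <;> by_cases hyz : y ∈ Bz
    · simp [Set.indicator_of_mem, hyx, hyz, add_comm]
    · rw [Set.indicator_of_mem hyx, Set.indicator_of_notMem hyz, Set.indicator_of_mem hyx,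
        Set.indicator_of_notMem hyz]
      simpa using hcase1 y hyx hyz
    · rw [Set.indicator_of_notMem hyx, Set.indicator_of_mem hyz, Set.indicator_of_mem hyz,
        Set.indicator_of_notMem hyx]
      simpa using hcase2 y hyx hyz
    · simp [Set.indicator_of_notMem, hyx, hyz]
  have hint : ∫⁻ y, (Bx.indicator g y + Bz.indicator (fun y => g (σ y)) y) ∂volume
      ≤ ∫⁻ y, (Bz.indicator g y + Bx.indicator (fun y => g (σ y)) y) ∂volume :=
    lintegral_mono hpt
  -- identify the pieces
  have hμBx : μ Bx = ∫⁻ y, Bx.indicator g y ∂volume := by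
    rw [hμdef, withDensity_apply _ hBx_meas, lintegral_indicator hBx_meas]
  have hμBz : μ Bz = ∫⁻ y, Bz.indicator g y ∂volume := by
    rw [hμdef, withDensity_apply _ hBz_meas, lintegral_indicator hBz_meas]
  have hcompz : (fun y => Bz.indicator (fun y => g (σ y)) y)
      = fun y => Bx.indicator g (σ y) := by
    funext y
    by_cases hy : y ∈ Bz
    · rw [Set.indicator_of_mem hy, Set.indicator_of_mem ((hmemx y).2 hy)]
    · rw [Set.indicator_of_notMem hy,
        Set.indicator_of_notMem (fun h => hy ((hmemx y).1 h))]
  have hcompx : (fun y => Bx.indicator (fun y => g (σ y)) y)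
      = fun y => Bz.indicator g (σ y) := by
    funext y
    by_cases hy : y ∈ Bx
    · rw [Set.indicator_of_mem hy, Set.indicator_of_mem ((hmemz y).2 hy)]
    · rw [Set.indicator_of_notMem hy,
        Set.indicator_of_notMem (fun h => hy ((hmemz y).1 h))]
  have hIz : ∫⁻ y, Bz.indicator (fun y => g (σ y)) y ∂volume = μ Bx := by
    rw [hcompz, hσmp.lintegral_comp (hg_meas.indicator hBx_meas), ← hμBx]
  have hIx : ∫⁻ y, Bx.indicator (fun y => g (σ y)) y ∂volume = μ Bz := by
    rw [hcompx, hσmp.lintegral_comp (hg_meas.indicator hBz_meas), ← hμBz]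
  have hlhs : ∫⁻ y, (Bx.indicator g y + Bz.indicator (fun y => g (σ y)) y) ∂volume
      = μ Bx + μ Bx := by
    rw [lintegral_add_left (hg_meas.indicator hBx_meas), ← hμBx, hIz]
  have hrhs : ∫⁻ y, (Bz.indicator g y + Bx.indicator (fun y => g (σ y)) y) ∂volume
      = μ Bz + μ Bz := by
    rw [lintegral_add_left (hg_meas.indicator hBz_meas), ← hμBz, hIx]
  rw [hlhs, hrhs] at hint
  by_contra hcon
  push_neg at hcon
  exact absurd hint (not_le.2 (ENNReal.add_lt_add hcon hcon))

/-- Packing bound for radially symmetric unimodal measures: if `S` is any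
packing of `B(0, r₂ - r₁)` by centers of pairwise disjoint balls of radius
`r₁` (pairwise distances `> 2r₁`), then for any `x` with `‖x‖ = r₂`,
`|S| · μ(B(x, r₁)) ≤ μ(B(0, r₂))`, i.e. `μ(B(x,r₁)) ≤ R*(r₂)/P(B_{r₂-r₁}, r₁)`. -/
theorem offcenter_ball_mass_packing_bound
    (d : ℕ) (f : ℝ → ℝ≥0∞) (hf_meas : Measurable f)
    (hf_mono : AntitoneOn f (Set.Ici 0))
    (μ : Measure (EuclideanSpace ℝ (Fin d)))
    (hμ : μ = volume.withDensity (fun x => f ‖x‖))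
    (hprob : IsProbabilityMeasure μ)
    (r₁ r₂ : ℝ) (hr₁ : 0 < r₁) (hr₁₂ : r₁ < r₂)
    (S : Finset (EuclideanSpace ℝ (Fin d)))
    (hS_in : ∀ z ∈ S, z ∈ Metric.closedBall (0 : EuclideanSpace ℝ (Fin d)) (r₂ - r₁))
    (hS_pack : ∀ z ∈ S, ∀ w ∈ S, z ≠ w → 2 * r₁ < dist z w)
    (x : EuclideanSpace ℝ (Fin d)) (hx : ‖x‖ = r₂) :
    (S.card : ℝ≥0∞) * μ (Metric.closedBall x r₁) ≤ μ (Metric.closedBall 0 r₂) := by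
  classical
  -- each small ball is contained in the big ball
  have hsub : ∀ z ∈ S, Metric.closedBall z r₁ ⊆ Metric.closedBall (0 : EuclideanSpace ℝ (Fin d)) r₂ := by
    intro z hz y hy
    have h1 : dist y z ≤ r₁ := hy
    have h2 : dist z (0 : EuclideanSpace ℝ (Fin d)) ≤ r₂ - r₁ := hS_in z hz
    have := dist_triangle y z (0 : EuclideanSpace ℝ (Fin d))
    simp only [Metric.mem_closedBall]
    linarith
  -- the small balls are pairwise disjoint
  have hdisj : (S : Set (EuclideanSpace ℝ (Fin d))).PairwiseDisjoint
      (fun z => Metric.closedBall z r₁) := by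
    intro z hz w hw hzw
    apply Metric.closedBall_disjoint_closedBall
    have := hS_pack z (by simpa using hz) w (by simpa using hw) hzw
    linarith
  -- measure of the union
  have hunion : μ (⋃ z ∈ S, Metric.closedBall z r₁) = ∑ z ∈ S, μ (Metric.closedBall z r₁) :=
    measure_biUnion_finset hdisj (fun z _ => measurableSet_closedBall)
  have hsub' : (⋃ z ∈ S, Metric.closedBall z r₁) ⊆ Metric.closedBall (0 : EuclideanSpace ℝ (Fin d)) r₂ := by
    intro y hy
    rcases Set.mem_iUnion₂.1 hy with ⟨z, hz, hyz⟩
    exact hsub z hz hyz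
  -- each small ball has mass at least that of the off-center ball
  have hmass : ∀ z ∈ S, μ (Metric.closedBall x r₁) ≤ μ (Metric.closedBall z r₁) := by
    intro z hz
    have hzn : ‖z‖ ≤ ‖x‖ := by
      have h2 : dist z (0 : EuclideanSpace ℝ (Fin d)) ≤ r₂ - r₁ := hS_in z hz
      rw [dist_zero_right] at h2
      rw [hx]
      linarith
    rw [hμ]
    exact radial_ball_mass_anti d f hf_meas hf_mono x z hzn r₁
  calc (S.card : ℝ≥0∞) * μ (Metric.closedBall x r₁)
      = S.card • μ (Metric.closedBall x r₁) := by rw [nsmul_eq_mul]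
    _ ≤ ∑ z ∈ S, μ (Metric.closedBall z r₁) := Finset.card_nsmul_le_sum S _ _ (fun z hz => hmass z hz)
    _ = μ (⋃ z ∈ S, Metric.closedBall z r₁) := hunion.symm
    _ ≤ μ (Metric.closedBall 0 r₂) := measure_mono hsub'
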